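/- For all φ₀, φ₁ with 0 < φ₀ < φ₁ < π/2, the map T̃_{C_ℓ}(ã) := √2 ∫₀^{π/2} dθ/√(1 − ã sin²θ) + (1/√2) ∫_{φ₀}^{φ₁} dx/√(ã − sin²x) is strictly convex on (sin²φ₁, 1), with second derivative (3/(2√2)) ∫₀^{π/2} sin⁴θ/(1 − ã sin²θ)^{5/2} dθ + (3/(4√2)) ∫_{φ₀}^{φ₁} dx/(ã − sin²x)^{5/2} > 0. -/

import Mathlib

open Real

open MeasureTheory Set Filter intervalIntegral

lemma TCl.hasDerivAt_int1 (n : ℕ) (p : ℝ) (hp : p ≤ 0) {a : ℝ} (ha0 : 0 ≤ a) (ha1 : a < 1) :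
    HasDerivAt
      (fun x => ∫ θ in (0:ℝ)..(π / 2), Real.sin θ ^ n * (1 - x * Real.sin θ ^ 2) ^ p)
      ((-p) * ∫ θ in (0:ℝ)..(π / 2),
        Real.sin θ ^ (n + 2) * (1 - a * Real.sin θ ^ 2) ^ (p - 1)) a := by
  set ε := (1 - a) / 2 with hεdef
  have hε0 : 0 < ε := by rw [hεdef]; linarith
  have key : ∀ x ∈ Metric.ball a ε, ∀ θ : ℝ, ε ≤ 1 - x * Real.sin θ ^ 2 := by
    intro x hx θ
    have hx' : |x - a| < ε := by simpa [Real.dist_eq] using hx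
    have h1 : x ≤ 1 - ε := by
      rw [abs_sub_lt_iff] at hx'
      rw [hεdef] at hx' ⊢; linarith [hx'.1]
    have hs0 : (0:ℝ) ≤ Real.sin θ ^ 2 := sq_nonneg _
    have hs1 : Real.sin θ ^ 2 ≤ 1 := Real.sin_sq_le_one θ
    have h2 : (0:ℝ) < 1 - ε := by rw [hεdef]; linarith
    rcases le_total x 0 with hx0 | hx0
    · nlinarith
    · nlinarith
  have hmem : a ∈ Metric.ball a ε := Metric.mem_ball_self hε0
  have h := intervalIntegral.hasDerivAt_integral_of_dominated_loc_of_deriv_le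
    (F := fun x θ => Real.sin θ ^ n * (1 - x * Real.sin θ ^ 2) ^ p)
    (F' := fun x θ => Real.sin θ ^ n *
      (-Real.sin θ ^ 2 * p * (1 - x * Real.sin θ ^ 2) ^ (p - 1)))
    (bound := fun _ => |p| * ε ^ (p - 1)) (a := (0:ℝ)) (b := π/2) (μ := volume) (x₀ := a) (Metric.ball_mem_nhds a hε0)
    ?_ ?_ ?_ ?_ ?_ ?_
  · -- conclude
    have h2 := h.2
    have : ((-p) * ∫ θ in (0:ℝ)..(π / 2),
        Real.sin θ ^ (n + 2) * (1 - a * Real.sin θ ^ 2) ^ (p - 1)) =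
        ∫ θ in (0:ℝ)..(π / 2), Real.sin θ ^ n *
          (-Real.sin θ ^ 2 * p * (1 - a * Real.sin θ ^ 2) ^ (p - 1)) := by
      rw [← intervalIntegral.integral_const_mul]
      apply intervalIntegral.integral_congr
      intro θ _
      ring
    rw [this]
    exact h2
  · -- hF_meas
    filter_upwards [Metric.ball_mem_nhds a hε0] with x hx
    have hc : Continuous fun θ : ℝ => Real.sin θ ^ n * (1 - x * Real.sin θ ^ 2) ^ p := by
      refine (Real.continuous_sin.pow n).mul ?_
      refine (continuous_const.sub (continuous_const.mul (Real.continuous_sin.pow 2))).rpow_const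
        fun θ => Or.inl (ne_of_gt (lt_of_lt_of_le hε0 (key x hx θ)))
    exact hc.aestronglyMeasurable.restrict
  · -- hF_int
    have hc : Continuous fun θ : ℝ => Real.sin θ ^ n * (1 - a * Real.sin θ ^ 2) ^ p := by
      refine (Real.continuous_sin.pow n).mul ?_
      refine (continuous_const.sub (continuous_const.mul (Real.continuous_sin.pow 2))).rpow_const
        fun θ => Or.inl (ne_of_gt (lt_of_lt_of_le hε0 (key a hmem θ)))
    exact hc.intervalIntegrable _ _
  · -- hF'_meas
    have hc : Continuous fun θ : ℝ => Real.sin θ ^ n *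
        (-Real.sin θ ^ 2 * p * (1 - a * Real.sin θ ^ 2) ^ (p - 1)) := by
      refine (Real.continuous_sin.pow n).mul (Continuous.mul ?_ ?_)
      · exact ((Real.continuous_sin.pow 2).neg).mul continuous_const
      · refine (continuous_const.sub (continuous_const.mul (Real.continuous_sin.pow 2))).rpow_const
          fun θ => Or.inl (ne_of_gt (lt_of_lt_of_le hε0 (key a hmem θ)))
    exact hc.aestronglyMeasurable.restrict
  · -- h_bound
    refine Filter.Eventually.of_forall fun θ _ x hx => ?_
    have hbase : ε ≤ 1 - x * Real.sin θ ^ 2 := key x hx θ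
    have hb0 : (0:ℝ) < 1 - x * Real.sin θ ^ 2 := lt_of_lt_of_le hε0 hbase
    have hy : (1 - x * Real.sin θ ^ 2) ^ (p - 1) ≤ ε ^ (p - 1) :=
      Real.rpow_le_rpow_of_nonpos hε0 hbase (by linarith)
    have hynn : (0:ℝ) ≤ (1 - x * Real.sin θ ^ 2) ^ (p - 1) := Real.rpow_nonneg hb0.le _
    have hsn : |Real.sin θ ^ n| ≤ 1 := by
      rw [abs_pow]
      exact pow_le_one₀ (abs_nonneg _) (Real.abs_sin_le_one θ)
    have hsn0 : (0:ℝ) ≤ |Real.sin θ ^ n| := abs_nonneg _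
    have hs2 : Real.sin θ ^ 2 ≤ 1 := Real.sin_sq_le_one θ
    have hs2' : (0:ℝ) ≤ Real.sin θ ^ 2 := sq_nonneg _
    have hp0 : (0:ℝ) ≤ |p| := abs_nonneg _
    rw [Real.norm_eq_abs, abs_mul, abs_mul, abs_mul, abs_neg,
      abs_of_nonneg hs2', abs_of_nonneg hynn]
    have t1 : Real.sin θ ^ 2 * |p| * (1 - x * Real.sin θ ^ 2) ^ (p - 1) ≤
        |p| * (1 - x * Real.sin θ ^ 2) ^ (p - 1) := by
      nlinarith [mul_nonneg hp0 hynn]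
    have t2 : |p| * (1 - x * Real.sin θ ^ 2) ^ (p - 1) ≤ |p| * ε ^ (p - 1) :=
      mul_le_mul_of_nonneg_left hy hp0
    have hXnn : (0:ℝ) ≤ Real.sin θ ^ 2 * |p| * (1 - x * Real.sin θ ^ 2) ^ (p - 1) := by
      positivity
    calc |Real.sin θ ^ n| * (Real.sin θ ^ 2 * |p| * (1 - x * Real.sin θ ^ 2) ^ (p - 1))
        ≤ 1 * (Real.sin θ ^ 2 * |p| * (1 - x * Real.sin θ ^ 2) ^ (p - 1)) :=
          mul_le_mul_of_nonneg_right hsn hXnn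
      _ = Real.sin θ ^ 2 * |p| * (1 - x * Real.sin θ ^ 2) ^ (p - 1) := one_mul _
      _ ≤ |p| * ε ^ (p - 1) := le_trans t1 t2
  · exact intervalIntegrable_const
  · -- h_diff
    refine Filter.Eventually.of_forall fun θ _ x hx => ?_
    have hb0 : (0:ℝ) < 1 - x * Real.sin θ ^ 2 := lt_of_lt_of_le hε0 (key x hx θ)
    have h1 : HasDerivAt (fun x : ℝ => 1 - x * Real.sin θ ^ 2) (-Real.sin θ ^ 2) x := by
      simpa using ((hasDerivAt_id x).mul_const (Real.sin θ ^ 2)).const_sub 1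
    have h2 := h1.rpow_const (p := p) (Or.inl (ne_of_gt hb0))
    simpa [mul_comm, mul_assoc, mul_left_comm] using h2.const_mul (Real.sin θ ^ n)

lemma TCl.hasDerivAt_int2 (p : ℝ) (hp : p ≤ 0) (φ₀ φ₁ s : ℝ)
    (hb : ∀ t ∈ Set.uIcc φ₀ φ₁, Real.sin t ^ 2 ≤ s) {a : ℝ} (ha : s < a) :
    HasDerivAt (fun x => ∫ t in φ₀..φ₁, (x - Real.sin t ^ 2) ^ p)
      (p * ∫ t in φ₀..φ₁, (a - Real.sin t ^ 2) ^ (p - 1)) a := by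
  set ε := (a - s) / 2 with hεdef
  have hε0 : 0 < ε := by rw [hεdef]; linarith
  have key : ∀ x ∈ Metric.ball a ε, ∀ t ∈ Set.uIcc φ₀ φ₁, ε ≤ x - Real.sin t ^ 2 := by
    intro x hx t ht
    have hx' : |x - a| < ε := by simpa [Real.dist_eq] using hx
    rw [abs_sub_lt_iff] at hx'
    have := hb t ht
    rw [hεdef] at hx' ⊢
    linarith [hx'.2]
  have hsub : Set.uIoc φ₀ φ₁ ⊆ Set.uIcc φ₀ φ₁ := Set.uIoc_subset_uIcc
  have hmem : a ∈ Metric.ball a ε := Metric.mem_ball_self hε0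
  have contOn : ∀ (x : ℝ) (q : ℝ), x ∈ Metric.ball a ε →
      ContinuousOn (fun t : ℝ => (x - Real.sin t ^ 2) ^ q) (Set.uIcc φ₀ φ₁) := by
    intro x q hx
    refine (continuousOn_const.sub ((Real.continuous_sin.pow 2).continuousOn)).rpow_const
      fun t ht => Or.inl (ne_of_gt (lt_of_lt_of_le hε0 (key x hx t ht)))
  have h := intervalIntegral.hasDerivAt_integral_of_dominated_loc_of_deriv_le
    (F := fun x t => (x - Real.sin t ^ 2) ^ p)
    (F' := fun x t => 1 * p * (x - Real.sin t ^ 2) ^ (p - 1))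
    (bound := fun _ => |p| * ε ^ (p - 1)) (a := φ₀) (b := φ₁) (μ := volume) (x₀ := a) (Metric.ball_mem_nhds a hε0)
    ?_ ?_ ?_ ?_ ?_ ?_
  · have h2 := h.2
    have : (p * ∫ t in φ₀..φ₁, (a - Real.sin t ^ 2) ^ (p - 1)) =
        ∫ t in φ₀..φ₁, 1 * p * (a - Real.sin t ^ 2) ^ (p - 1) := by
      rw [← intervalIntegral.integral_const_mul]
      apply intervalIntegral.integral_congr
      intro t _
      ring
    rw [this]
    exact h2
  · filter_upwards [Metric.ball_mem_nhds a hε0] with x hx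
    exact ((contOn x p hx).mono hsub).aestronglyMeasurable measurableSet_uIoc
  · exact (contOn a p hmem).intervalIntegrable
  · exact (((contOn a (p - 1) hmem).mono hsub).aestronglyMeasurable measurableSet_uIoc).const_mul _
  · refine Filter.Eventually.of_forall fun t ht x hx => ?_
    have hbase : ε ≤ x - Real.sin t ^ 2 := key x hx t (hsub ht)
    have hy : (x - Real.sin t ^ 2) ^ (p - 1) ≤ ε ^ (p - 1) :=
      Real.rpow_le_rpow_of_nonpos hε0 hbase (by linarith)
    have hynn : (0:ℝ) ≤ (x - Real.sin t ^ 2) ^ (p - 1) :=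
      Real.rpow_nonneg (le_trans hε0.le hbase) _
    rw [Real.norm_eq_abs, one_mul, abs_mul, abs_of_nonneg hynn]
    exact mul_le_mul_of_nonneg_left hy (abs_nonneg _)
  · exact intervalIntegrable_const
  · refine Filter.Eventually.of_forall fun t ht x hx => ?_
    have hb0 : (0:ℝ) < x - Real.sin t ^ 2 := lt_of_lt_of_le hε0 (key x hx t (hsub ht))
    exact ((hasDerivAt_id x).sub_const (Real.sin t ^ 2)).rpow_const (Or.inl (ne_of_gt hb0))


lemma TCl.coef (r A B : ℝ) (hr2 : r * r = 2) :
    r * (-(-(1/2)) * (-(-(1/2)-1) * A)) + 1/r * (-(1/2) * ((-(1/2)-1) * B)) =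
      3/(2*r) * A + 3/(4*r) * B := by
  have hr0 : r ≠ 0 := by intro h; rw [h] at hr2; norm_num at hr2
  field_simp
  ring_nf
  linear_combination (12*A) * hr2

/-- The map `T̃_{C_ℓ}(ã) = √2 ∫₀^{π/2} dθ/√(1 − ã sin²θ)
 + (1/√2) ∫_{φ₀}^{φ₁} dx/√(ã − sin²x)`. -/
noncomputable def timeMapTClTilde (φ₀ φ₁ a : ℝ) : ℝ :=
  Real.sqrt 2 * (∫ θ in (0:ℝ)..(π / 2), 1 / Real.sqrt (1 - a * Real.sin θ ^ 2)) +
    (1 / Real.sqrt 2) * ∫ x in φ₀..φ₁, 1 / Real.sqrt (a - Real.sin x ^ 2)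

/-- For `0 < φ₀ < φ₁ < π/2`, the map `T̃_{C_ℓ}` is strictly convex on
`(sin²φ₁, 1)`, with second derivative
`(3/(2√2)) ∫₀^{π/2} sin⁴θ/(1 − ã sin²θ)^{5/2} dθ
 + (3/(4√2)) ∫_{φ₀}^{φ₁} dx/(ã − sin²x)^{5/2} > 0`. -/
theorem timeMapTClTilde_strictConvex (φ₀ φ₁ : ℝ) (h₀ : 0 < φ₀) (h₀₁ : φ₀ < φ₁)
    (h₁ : φ₁ < π / 2) :
    StrictConvexOn ℝ (Set.Ioo (Real.sin φ₁ ^ 2) 1) (timeMapTClTilde φ₀ φ₁) ∧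
    ∀ a ∈ Set.Ioo (Real.sin φ₁ ^ 2) 1,
      deriv (deriv (timeMapTClTilde φ₀ φ₁)) a =
        (3 / (2 * Real.sqrt 2)) *
          (∫ θ in (0:ℝ)..(π / 2),
            Real.sin θ ^ 4 / (1 - a * Real.sin θ ^ 2) ^ ((5:ℝ)/2)) +
        (3 / (4 * Real.sqrt 2)) *
          (∫ x in φ₀..φ₁, 1 / (a - Real.sin x ^ 2) ^ ((5:ℝ)/2)) ∧
      0 < (3 / (2 * Real.sqrt 2)) *
          (∫ θ in (0:ℝ)..(π / 2),
            Real.sin θ ^ 4 / (1 - a * Real.sin θ ^ 2) ^ ((5:ℝ)/2)) +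
        (3 / (4 * Real.sqrt 2)) *
          (∫ x in φ₀..φ₁, 1 / (a - Real.sin x ^ 2) ^ ((5:ℝ)/2)) := by
  have hpi := Real.pi_pos
  have hφ₁0 : 0 < φ₁ := h₀.trans h₀₁
  have hsinpos : 0 < Real.sin φ₁ := Real.sin_pos_of_pos_of_lt_pi hφ₁0 (by linarith)
  have hsin1 : Real.sin φ₁ < 1 := by
    have h := Real.strictMonoOn_sin (a := φ₁) (b := π / 2)
      ⟨by linarith, h₁.le⟩ ⟨by linarith, le_refl _⟩ h₁
    rwa [Real.sin_pi_div_two] at h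
  set s : ℝ := Real.sin φ₁ ^ 2 with hsdef
  have hs0 : 0 < s := pow_pos hsinpos 2
  have hs1 : s < 1 := by rw [hsdef]; nlinarith
  have hb : ∀ t ∈ Set.uIcc φ₀ φ₁, Real.sin t ^ 2 ≤ s := by
    intro t ht
    rw [Set.uIcc_of_le h₀₁.le] at ht
    have h0t : 0 ≤ Real.sin t := Real.sin_nonneg_of_nonneg_of_le_pi
      (by linarith [ht.1]) (by linarith [ht.2])
    have hmono : Real.sin t ≤ Real.sin φ₁ :=
      Real.strictMonoOn_sin.monotoneOn ⟨by linarith [ht.1], by linarith [ht.2]⟩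
        ⟨by linarith, h₁.le⟩ ht.2
    rw [hsdef]
    exact pow_le_pow_left₀ h0t hmono 2
  have hbase1 : ∀ x ∈ Set.Ioo s 1, ∀ θ : ℝ, 0 < 1 - x * Real.sin θ ^ 2 := by
    intro x hx θ
    have hx0 : 0 < x := hs0.trans hx.1
    have hx1 : x < 1 := hx.2
    nlinarith [Real.sin_sq_le_one θ, sq_nonneg (Real.sin θ)]
  have hbase2 : ∀ x ∈ Set.Ioo s 1, ∀ t ∈ Set.uIcc φ₀ φ₁, 0 < x - Real.sin t ^ 2 := by
    intro x hx t ht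
    have := hb t ht
    linarith [hx.1]
  -- the rpow form of the time map
  set G : ℝ → ℝ := fun x =>
    Real.sqrt 2 * (∫ θ in (0:ℝ)..(π / 2),
        Real.sin θ ^ 0 * (1 - x * Real.sin θ ^ 2) ^ (-(1 / (2:ℝ)))) +
      (1 / Real.sqrt 2) * ∫ t in φ₀..φ₁, (x - Real.sin t ^ 2) ^ (-(1 / (2:ℝ))) with hGdef
  have hEq : Set.EqOn (timeMapTClTilde φ₀ φ₁) G (Set.Ioo s 1) := by
    intro x hx
    rw [hGdef]
    unfold timeMapTClTilde
    congr 1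
    · congr 1
      apply intervalIntegral.integral_congr
      intro θ _
      dsimp only
      have hb0 := hbase1 x hx θ
      rw [pow_zero, one_mul, one_div, Real.sqrt_eq_rpow, ← Real.rpow_neg hb0.le]
    · congr 1
      apply intervalIntegral.integral_congr
      intro t ht
      dsimp only
      have hb0 := hbase2 x hx t ht
      rw [one_div, Real.sqrt_eq_rpow, ← Real.rpow_neg hb0.le]
  -- the first derivative
  set D : ℝ → ℝ := fun x =>
    Real.sqrt 2 * (-(-(1 / (2:ℝ))) * ∫ θ in (0:ℝ)..(π / 2),
        Real.sin θ ^ (0 + 2) * (1 - x * Real.sin θ ^ 2) ^ (-(1 / (2:ℝ)) - 1)) +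
      (1 / Real.sqrt 2) * ((-(1 / (2:ℝ))) *
        ∫ t in φ₀..φ₁, (x - Real.sin t ^ 2) ^ (-(1 / (2:ℝ)) - 1)) with hDdef
  have hf : ∀ x ∈ Set.Ioo s 1, HasDerivAt (timeMapTClTilde φ₀ φ₁) (D x) x := by
    intro x hx
    have hx0 : 0 < x := hs0.trans hx.1
    have hG1 : HasDerivAt G (D x) x := by
      rw [hGdef, hDdef]
      exact ((TCl.hasDerivAt_int1 0 (-(1 / (2:ℝ))) (by norm_num) hx0.le hx.2).const_mul
          (Real.sqrt 2)).add
        ((TCl.hasDerivAt_int2 (-(1 / (2:ℝ))) (by norm_num) φ₀ φ₁ s hb hx.1).const_mul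
          (1 / Real.sqrt 2))
    exact hG1.congr_of_eventuallyEq
      (Filter.eventuallyEq_of_mem (isOpen_Ioo.mem_nhds hx) hEq)
  have hderivEq : Set.EqOn (deriv (timeMapTClTilde φ₀ φ₁)) D (Set.Ioo s 1) :=
    fun x hx => (hf x hx).deriv
  -- the second derivative
  have hD2 : ∀ a ∈ Set.Ioo s 1, HasDerivAt D
      (Real.sqrt 2 * (-(-(1 / (2:ℝ))) * ((-(-(1 / (2:ℝ)) - 1)) *
          ∫ θ in (0:ℝ)..(π / 2),
            Real.sin θ ^ (0 + 2 + 2) * (1 - a * Real.sin θ ^ 2) ^ (-(1 / (2:ℝ)) - 1 - 1))) +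
        (1 / Real.sqrt 2) * ((-(1 / (2:ℝ))) * ((-(1 / (2:ℝ)) - 1) *
          ∫ t in φ₀..φ₁, (a - Real.sin t ^ 2) ^ (-(1 / (2:ℝ)) - 1 - 1)))) a := by
    intro a ha
    have ha0 : 0 < a := hs0.trans ha.1
    rw [hDdef]
    exact (((TCl.hasDerivAt_int1 (0 + 2) (-(1 / (2:ℝ)) - 1) (by norm_num) ha0.le
        ha.2).const_mul (-(-(1 / (2:ℝ))))).const_mul (Real.sqrt 2)).add
      (((TCl.hasDerivAt_int2 (-(1 / (2:ℝ)) - 1) (by norm_num) φ₀ φ₁ s hb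
        ha.1).const_mul (-(1 / (2:ℝ)))).const_mul (1 / Real.sqrt 2))
  have hsecond : ∀ a ∈ Set.Ioo s 1,
      deriv (deriv (timeMapTClTilde φ₀ φ₁)) a =
        (3 / (2 * Real.sqrt 2)) *
          (∫ θ in (0:ℝ)..(π / 2),
            Real.sin θ ^ 4 / (1 - a * Real.sin θ ^ 2) ^ ((5:ℝ)/2)) +
        (3 / (4 * Real.sqrt 2)) *
          (∫ x in φ₀..φ₁, 1 / (a - Real.sin x ^ 2) ^ ((5:ℝ)/2)) := by
    intro a ha
    have h1 : deriv (timeMapTClTilde φ₀ φ₁) =ᶠ[nhds a] D :=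
      Filter.eventuallyEq_of_mem (isOpen_Ioo.mem_nhds ha) hderivEq
    rw [h1.deriv_eq, (hD2 a ha).deriv]
    have hI1 : (∫ θ in (0:ℝ)..(π / 2),
        Real.sin θ ^ (0 + 2 + 2) * (1 - a * Real.sin θ ^ 2) ^ (-(1 / (2:ℝ)) - 1 - 1)) =
        ∫ θ in (0:ℝ)..(π / 2),
          Real.sin θ ^ 4 / (1 - a * Real.sin θ ^ 2) ^ ((5:ℝ)/2) := by
      apply intervalIntegral.integral_congr
      intro θ _
      dsimp only
      have hb0 := hbase1 a ha θ
      rw [show (-(1 / (2:ℝ)) - 1 - 1) = -((5:ℝ)/2) by norm_num,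
        Real.rpow_neg hb0.le, div_eq_mul_inv]
      norm_num [div_eq_mul_inv]
    have hI2 : (∫ t in φ₀..φ₁, (a - Real.sin t ^ 2) ^ (-(1 / (2:ℝ)) - 1 - 1)) =
        ∫ t in φ₀..φ₁, 1 / (a - Real.sin t ^ 2) ^ ((5:ℝ)/2) := by
      apply intervalIntegral.integral_congr
      intro t ht
      dsimp only
      have hb0 := hbase2 a ha t ht
      rw [show (-(1 / (2:ℝ)) - 1 - 1) = -((5:ℝ)/2) by norm_num,
        Real.rpow_neg hb0.le, one_div]
    rw [hI1, hI2]
    exact TCl.coef (Real.sqrt 2) _ _ (Real.mul_self_sqrt (by norm_num))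
  have hpos : ∀ a ∈ Set.Ioo s 1,
      0 < (3 / (2 * Real.sqrt 2)) *
          (∫ θ in (0:ℝ)..(π / 2),
            Real.sin θ ^ 4 / (1 - a * Real.sin θ ^ 2) ^ ((5:ℝ)/2)) +
        (3 / (4 * Real.sqrt 2)) *
          (∫ x in φ₀..φ₁, 1 / (a - Real.sin x ^ 2) ^ ((5:ℝ)/2)) := by
    intro a ha
    have hA : 0 < ∫ θ in (0:ℝ)..(π / 2),
        Real.sin θ ^ 4 / (1 - a * Real.sin θ ^ 2) ^ ((5:ℝ)/2) := by
      apply intervalIntegral.intervalIntegral_pos_of_pos_on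
      · refine Continuous.intervalIntegrable ?_ _ _
        refine (Real.continuous_sin.pow 4).div
          ((continuous_const.sub (continuous_const.mul
            (Real.continuous_sin.pow 2))).rpow_const
            fun θ => Or.inl (hbase1 a ha θ).ne') ?_
        intro θ
        exact (Real.rpow_pos_of_pos (hbase1 a ha θ) _).ne'
      · intro θ hθ
        exact div_pos (pow_pos (Real.sin_pos_of_pos_of_lt_pi hθ.1 (by linarith [hθ.2])) 4)
          (Real.rpow_pos_of_pos (hbase1 a ha θ) _)
      · linarith
    have hB : 0 < ∫ x in φ₀..φ₁, 1 / (a - Real.sin x ^ 2) ^ ((5:ℝ)/2) := by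
      apply intervalIntegral.intervalIntegral_pos_of_pos_on
      · refine ContinuousOn.intervalIntegrable ?_
        refine ContinuousOn.div continuousOn_const
          ((continuousOn_const.sub ((Real.continuous_sin.pow 2).continuousOn)).rpow_const
            fun t ht => Or.inl (hbase2 a ha t ht).ne') ?_
        intro t ht
        exact (Real.rpow_pos_of_pos (hbase2 a ha t ht) _).ne'
      · intro t ht
        have ht' : t ∈ Set.uIcc φ₀ φ₁ := by
          rw [Set.uIcc_of_le h₀₁.le]
          exact Set.Ioo_subset_Icc_self ht
        exact div_pos one_pos (Real.rpow_pos_of_pos (hbase2 a ha t ht') _)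
      · exact h₀₁
    have hc1 : (0:ℝ) < 3 / (2 * Real.sqrt 2) := by positivity
    have hc2 : (0:ℝ) < 3 / (4 * Real.sqrt 2) := by positivity
    exact add_pos (mul_pos hc1 hA) (mul_pos hc2 hB)
  refine ⟨?_, fun a ha => ⟨hsecond a ha, hpos a ha⟩⟩
  apply strictConvexOn_of_deriv2_pos (convex_Ioo _ _)
  · intro x hx
    exact ((hf x hx).differentiableAt).continuousAt.continuousWithinAt
  · intro x hx
    rw [interior_Ioo] at hx
    have hit : deriv^[2] (timeMapTClTilde φ₀ φ₁) x =
        deriv (deriv (timeMapTClTilde φ₀ φ₁)) x := by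
      simp [Function.iterate_succ, Function.iterate_zero]
    rw [hit, hsecond x hx]
    exact hpos x hx
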